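/- Let f : ℝⁿ → ℝ be α-strongly convex (α > 0) and L-smooth with κ = L/α > 1, let Ψ : ℝⁿ → ℝ ∪ {+∞} be proper, closed and convex, set F = f + Ψ, and let x* be the minimizer of F. Fix x₀ ∈ ℝⁿ, let w₀ = x₀, and for k ≥ 1 define x_k = prox_{Ψ/L}(w_{k−1} − ∇f(w_{k−1})/L) and w_k = x_k + θ(x_k − x_{k−1}) with θ = (√κ − 1)/(√κ + 1). Define y₀ = x₀ and y_k = x_k + (√κ − 1)(x_k − x_{k−1}) for k ≥ 1. Define scalars σ̃₀² = ‖y₀ − x*‖² + 2(F(x₀) − F(x*))/α and σ̃_{k+1}² = (1 − κ^{−1/2}) σ̃_k² − (κ^{1/2} − κ^{−1/2}) ‖w_k − x_k‖². Then for every k ≥ 0, ‖y_k − x*‖² + 2(F(x_k) − F(x*))/α ≤ σ̃_k². -/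

import Mathlib

set_option maxHeartbeats 1000000


open scoped RealInnerProductSpace

private lemma agpb_norm_expand {E : Type*} [NormedAddCommGroup E] [InnerProductSpace ℝ E]
    (c1 c2 c3 : ℝ) (a b u : E) :
    ‖c1 • a + c2 • b + c3 • u‖ ^ 2
      = c1^2 * ⟪a,a⟫ + c2^2 * ⟪b,b⟫ + c3^2 * ⟪u,u⟫
        + 2*c1*c2*⟪a,b⟫ + 2*c1*c3*⟪a,u⟫ + 2*c2*c3*⟪b,u⟫ := by
  rw [← real_inner_self_eq_norm_sq]
  simp only [inner_add_left, inner_add_right, inner_smul_left, inner_smul_right,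
    starRingEnd_apply, star_trivial, real_inner_comm b a, real_inner_comm u a,
    real_inner_comm u b]
  ring

private lemma agpb_scalar (s αr P Q U AB AU BU Fp Fk Fs : ℝ) (hs : 1 < s) (hα : 0 < αr)
    (h1 : Fp ≤ Fk - s^2*αr/2*U - s^2*αr*(BU - AU) - αr/2*(Q - 2*AB + P))
    (h2 : Fp ≤ Fs - s^2*αr/2*U - s^2*αr*(-AU) - αr/2*P) :
    (s^2*P + (1-s)^2*Q + s^2*U + 2*s*(1-s)*AB + (-(2*s^2))*AU + (-(2*s*(1-s)))*BU)
        + 2/αr*(Fp - Fs)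
      ≤ (1 - 1/s) * (((1+s)^2*P + s^2*Q + (-(2*(1+s)*s))*AB) + 2/αr*(Fk - Fs))
        - (s - 1/s) * (P - 2*AB + Q) := by
  have hs0 : (0:ℝ) < s := by linarith
  have hα0 : αr ≠ 0 := ne_of_gt hα
  have hc1 : (0:ℝ) ≤ (1 - 1/s) * (2/αr) := by
    have h1s : 1/s < 1 := by rw [div_lt_one hs0]; exact hs
    have : (0:ℝ) ≤ 2/αr := by positivity
    nlinarith
  have hc2 : (0:ℝ) ≤ (1/s) * (2/αr) := by positivity
  have H1 : (1 - 1/s) * (2/αr) *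
      (Fp - (Fk - s^2*αr/2*U - s^2*αr*(BU - AU) - αr/2*(Q - 2*AB + P))) ≤ 0 :=
    mul_nonpos_iff.mpr (Or.inl ⟨hc1, by linarith⟩)
  have H2 : (1/s) * (2/αr) *
      (Fp - (Fs - s^2*αr/2*U - s^2*αr*(-AU) - αr/2*P)) ≤ 0 :=
    mul_nonpos_iff.mpr (Or.inl ⟨hc2, by linarith⟩)
  have key : (s^2*P + (1-s)^2*Q + s^2*U + 2*s*(1-s)*AB + (-(2*s^2))*AU + (-(2*s*(1-s)))*BU)
        + 2/αr*(Fp - Fs)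
      - ((1 - 1/s) * (((1+s)^2*P + s^2*Q + (-(2*(1+s)*s))*AB) + 2/αr*(Fk - Fs))
        - (s - 1/s) * (P - 2*AB + Q))
      = (1 - 1/s) * (2/αr) *
          (Fp - (Fk - s^2*αr/2*U - s^2*αr*(BU - AU) - αr/2*(Q - 2*AB + P)))
        + (1/s) * (2/αr) *
          (Fp - (Fs - s^2*αr/2*U - s^2*αr*(-AU) - αr/2*P)) := by
    field_simp
    ring
  linarith [key, H1, H2]

private lemma agpb_proxsub {n : ℕ} (L : ℝ) (hL : 0 < L)
    (Ψ : EuclideanSpace ℝ (Fin n) → EReal)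
    (hbot : ∀ x, Ψ x ≠ ⊥)
    (hconvex : ∀ x y : EuclideanSpace ℝ (Fin n), ∀ a b : ℝ, 0 ≤ a → 0 ≤ b → a + b = 1 →
      Ψ (a • x + b • y) ≤ (a : EReal) * Ψ x + (b : EReal) * Ψ y)
    (prox : ℝ → EuclideanSpace ℝ (Fin n) → EuclideanSpace ℝ (Fin n))
    (hprox : ∀ t : ℝ, 0 < t → ∀ x z : EuclideanSpace ℝ (Fin n),
      Ψ (prox t x) + ((‖x - prox t x‖ ^ 2 / (2 * t) : ℝ) : EReal)
        ≤ Ψ z + ((‖x - z‖ ^ 2 / (2 * t) : ℝ) : EReal))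
    (v z : EuclideanSpace ℝ (Fin n)) (hz : Ψ z ≠ ⊤)
    (hpt : Ψ (prox (1 / L) v) ≠ ⊤) :
    (Ψ (prox (1 / L) v)).toReal
      ≤ (Ψ z).toReal + L * ⟪v - prox (1 / L) v, prox (1 / L) v - z⟫ := by
  have htL : (0:ℝ) < 1 / L := by positivity
  set p := prox (1 / L) v with hpdef
  by_contra hcon
  push_neg at hcon
  set ψp := (Ψ p).toReal with hψp
  set ψz := (Ψ z).toReal with hψz
  set ε := (ψp - (ψz + L * ⟪v - p, p - z⟫)) / 2 with hεdef
  have hε0 : 0 < ε := by rw [hεdef]; linarith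
  set C := L / 2 * ‖z - p‖ ^ 2 with hCdef
  have hC0 : 0 ≤ C := by positivity
  set lam := min 1 (ε / (C + 1)) with hlamdef
  have hlam0 : 0 < lam := lt_min one_pos (by positivity)
  have hlam1 : lam ≤ 1 := min_le_left _ _
  have hcomb := hconvex z p lam (1 - lam) (le_of_lt hlam0) (by linarith) (by ring)
  have hq := hprox (1 / L) htL v (lam • z + (1 - lam) • p)
  have hchain : Ψ p + ((‖v - p‖ ^ 2 / (2 * (1 / L)) : ℝ) : EReal)
      ≤ ((lam : ℝ) : EReal) * Ψ z + (((1 - lam : ℝ)) : EReal) * Ψ p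
        + ((‖v - (lam • z + (1 - lam) • p)‖ ^ 2 / (2 * (1 / L)) : ℝ) : EReal) :=
    le_trans hq (add_le_add_left hcomb _)
  rw [← EReal.coe_toReal hpt (hbot p), ← EReal.coe_toReal hz (hbot z)] at hchain
  have hchainR : ψp + ‖v - p‖ ^ 2 / (2 * (1 / L))
      ≤ lam * ψz + (1 - lam) * ψp
        + ‖v - (lam • z + (1 - lam) • p)‖ ^ 2 / (2 * (1 / L)) := by
    exact_mod_cast hchain
  have hvq : v - (lam • z + (1 - lam) • p) = (v - p) - lam • (z - p) := by module
  have hnorm : ‖v - (lam • z + (1 - lam) • p)‖ ^ 2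
      = ‖v - p‖ ^ 2 - 2 * lam * ⟪v - p, z - p⟫ + lam ^ 2 * ‖z - p‖ ^ 2 := by
    rw [hvq, norm_sub_sq_real, real_inner_smul_right, norm_smul, Real.norm_eq_abs,
      mul_pow, sq_abs]
    ring
  have ht2 : ∀ r : ℝ, r / (2 * (1 / L)) = L / 2 * r := by
    intro r; field_simp
  rw [hnorm, ht2, ht2] at hchainR
  have hps : ψp ≤ ψz - L * ⟪v - p, z - p⟫ + L / 2 * lam * ‖z - p‖ ^ 2 := by
    have h3 : lam * ψp ≤ lam * (ψz - L * ⟪v - p, z - p⟫ + L / 2 * lam * ‖z - p‖ ^ 2) := by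
      ring_nf
      ring_nf at hchainR
      linarith [hchainR]
    exact le_of_mul_le_mul_left h3 hlam0
  have hinner : ⟪v - p, p - z⟫ = -⟪v - p, z - p⟫ := by
    rw [← inner_neg_right]; congr 1; abel
  have hlamC : lam * C ≤ ε := by
    have h4 : lam ≤ ε / (C + 1) := min_le_right _ _
    have h5 : lam * (C + 1) ≤ ε := (le_div_iff₀ (by positivity : (0:ℝ) < C + 1)).mp h4
    linarith [hlam0]
  have hCC : L / 2 * lam * ‖z - p‖ ^ 2 = lam * C := by rw [hCdef]; ring
  rw [hεdef] at hlamC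
  rw [hCC] at hps
  rw [hinner] at hcon hlamC
  linarith

/-- potential bound for Nesterov's accelerated gradient method
in the strongly convex composite setting:
`‖y_k − x*‖² + 2(F(x_k) − F(x*))/α ≤ σ̃_k²`. -/
theorem accelerated_gradient_potential_bound {n : ℕ} (L α κ θ : ℝ)
    (hα : 0 < α) (hαL : α ≤ L) (hκ : κ = L / α) (hκ1 : 1 < κ)
    (hθ : θ = (Real.sqrt κ - 1) / (Real.sqrt κ + 1))
    (f : EuclideanSpace ℝ (Fin n) → ℝ)
    (f' : EuclideanSpace ℝ (Fin n) → EuclideanSpace ℝ (Fin n))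
    (hdiff : ∀ x, HasGradientAt f (f' x) x)
    (hsmooth : ∀ x y : EuclideanSpace ℝ (Fin n),
      |f x - f y - ⟪f' y, x - y⟫| ≤ L / 2 * ‖x - y‖ ^ 2)
    (hstrong : ∀ x y : EuclideanSpace ℝ (Fin n),
      f x + ⟪f' x, y - x⟫ + α / 2 * ‖y - x‖ ^ 2 ≤ f y)
    (Ψ : EuclideanSpace ℝ (Fin n) → EReal)
    (hproper : (∀ x, Ψ x ≠ ⊥) ∧ (∃ x, Ψ x ≠ ⊤))
    (hclosed : LowerSemicontinuous Ψ)
    (hconvex : ∀ x y : EuclideanSpace ℝ (Fin n), ∀ a b : ℝ, 0 ≤ a → 0 ≤ b → a + b = 1 →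
      Ψ (a • x + b • y) ≤ (a : EReal) * Ψ x + (b : EReal) * Ψ y)
    (prox : ℝ → EuclideanSpace ℝ (Fin n) → EuclideanSpace ℝ (Fin n))
    (hprox : ∀ t : ℝ, 0 < t → ∀ x z : EuclideanSpace ℝ (Fin n),
      Ψ (prox t x) + ((‖x - prox t x‖ ^ 2 / (2 * t) : ℝ) : EReal)
        ≤ Ψ z + ((‖x - z‖ ^ 2 / (2 * t) : ℝ) : EReal))
    (F : EuclideanSpace ℝ (Fin n) → EReal)
    (hF : ∀ x, F x = (f x : EReal) + Ψ x)
    (G : ℝ → EuclideanSpace ℝ (Fin n) → EuclideanSpace ℝ (Fin n))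
    (hG : ∀ t x, G t x = t⁻¹ • (x - prox t (x - t • f' x)))
    (xstar : EuclideanSpace ℝ (Fin n)) (hxstar : ∀ w, F xstar ≤ F w)
    (x w y : ℕ → EuclideanSpace ℝ (Fin n))
    (hw0 : w 0 = x 0)
    (hxk : ∀ k : ℕ, x (k + 1) = prox (1 / L) (w k - (1 / L) • f' (w k)))
    (hwk : ∀ k : ℕ, w (k + 1) = x (k + 1) + θ • (x (k + 1) - x k))
    (hy0 : y 0 = x 0)
    (hyk : ∀ k : ℕ, y (k + 1) = x (k + 1) + (Real.sqrt κ - 1) • (x (k + 1) - x k))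
    (σ : ℕ → ℝ)
    (hσ0 : ((σ 0 : ℝ) : EReal) = ((‖y 0 - xstar‖ ^ 2 : ℝ) : EReal)
        + ((2 / α : ℝ) : EReal) * (F (x 0) - F xstar))
    (hσk : ∀ k : ℕ, σ (k + 1) = (1 - (Real.sqrt κ)⁻¹) * σ k
        - (Real.sqrt κ - (Real.sqrt κ)⁻¹) * ‖w k - x k‖ ^ 2) :
    ∀ k : ℕ,
      ((‖y k - xstar‖ ^ 2 : ℝ) : EReal)
          + ((2 / α : ℝ) : EReal) * (F (x k) - F xstar)
        ≤ ((σ k : ℝ) : EReal) := by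
  obtain ⟨hbot, z₀, hz₀⟩ := hproper
  have hL : 0 < L := lt_of_lt_of_le hα hαL
  have hLne : L ≠ 0 := ne_of_gt hL
  have htL : (0:ℝ) < 1 / L := by positivity
  have hκ0 : (0:ℝ) < κ := lt_trans one_pos hκ1
  set s := Real.sqrt κ with hsdef
  have hs1 : 1 < s := by rw [hsdef, ← Real.sqrt_one]; exact Real.sqrt_lt_sqrt (by norm_num) hκ1
  have hs0 : 0 < s := lt_trans one_pos hs1
  have hsne : s ≠ 0 := ne_of_gt hs0
  have hs1ne : s + 1 ≠ 0 := by positivity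
  have hss : s ^ 2 = κ := Real.sq_sqrt hκ0.le
  have hLs : L = s ^ 2 * α := by rw [hss, hκ]; field_simp
  set ψ := fun p : EuclideanSpace ℝ (Fin n) => (Ψ p).toReal with hψdef
  have hpsi : ∀ p, Ψ p ≠ ⊤ → Ψ p = ((ψ p : ℝ) : EReal) := fun p hp =>
    (EReal.coe_toReal hp (hbot p)).symm
  have hproxtop : ∀ v, Ψ (prox (1 / L) v) ≠ ⊤ := by
    intro v hcon
    have h := hprox (1 / L) htL v z₀
    rw [hcon, EReal.top_add_coe] at h
    exact (h.trans_lt (EReal.add_lt_top hz₀ (EReal.coe_ne_top _))).ne rfl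
  have hstartop : Ψ xstar ≠ ⊤ := by
    intro hcon
    have h := hxstar z₀
    rw [hF xstar, hF z₀, hcon, EReal.coe_add_top] at h
    exact (h.trans_lt (EReal.add_lt_top (EReal.coe_ne_top _) hz₀)).ne rfl
  have hFeq : ∀ p, Ψ p ≠ ⊤ → F p = ((f p + ψ p : ℝ) : EReal) := by
    intro p hp; rw [hF, hpsi p hp, EReal.coe_add]
  have hx0top : Ψ (x 0) ≠ ⊤ := by
    intro hcon
    have hsub : F (x 0) - F xstar = ⊤ := by
      rw [hF (x 0), hcon, EReal.coe_add_top, hFeq xstar hstartop, EReal.top_sub_coe]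
    rw [hsub, EReal.coe_mul_top_of_pos (by positivity), EReal.coe_add_top] at hσ0
    exact EReal.coe_ne_top _ hσ0
  have hxtop : ∀ k, Ψ (x k) ≠ ⊤ := by
    intro k; cases k with
    | zero => exact hx0top
    | succ m => rw [hxk m]; exact hproxtop _
  have hproxsub : ∀ v z, Ψ z ≠ ⊤ →
      ψ (prox (1 / L) v) ≤ ψ z + L * ⟪v - prox (1 / L) v, prox (1 / L) v - z⟫ := by
    intro v z hz
    exact agpb_proxsub L hL Ψ hbot hconvex prox hprox v z hz (hproxtop v)
  -- descent inequality
  have hdescent : ∀ (k : ℕ) z, Ψ z ≠ ⊤ →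
      f (x (k+1)) + ψ (x (k+1)) ≤ (f z + ψ z) - L / 2 * ‖w k - x (k+1)‖ ^ 2
        - L * ⟪w k - x (k+1), z - w k⟫ - α / 2 * ‖z - w k‖ ^ 2 := by
    intro k z hz
    set W := w k with hWdef
    set X1 := x (k+1) with hX1def
    set u := W - X1 with hudef
    set v := W - (1 / L) • f' W with hvdef
    have hXp : X1 = prox (1 / L) v := by rw [hvdef, hWdef, hX1def]; exact hxk k
    have hps : ψ X1 ≤ ψ z + L * ⟪v - X1, X1 - z⟫ := by
      rw [hXp]; exact hproxsub v z hz
    have hsm : f X1 ≤ f W + ⟪f' W, X1 - W⟫ + L / 2 * ‖X1 - W‖ ^ 2 := by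
      have h := abs_le.mp (hsmooth X1 W)
      linarith [h.2]
    have hsc : f W ≤ f z - ⟪f' W, z - W⟫ - α / 2 * ‖z - W‖ ^ 2 := by
      linarith [hstrong W z]
    have e0 : X1 - W = -u := by rw [hudef]; abel
    have e1 : ⟪f' W, X1 - W⟫ = -⟪f' W, u⟫ := by rw [e0, inner_neg_right]
    have e2 : ‖X1 - W‖ ^ 2 = ‖u‖ ^ 2 := by rw [e0, norm_neg]
    have e3 : L * ⟪v - X1, X1 - z⟫
        = L * ⟪u, W - z⟫ - L * ‖u‖ ^ 2 - ⟪f' W, W - z⟫ + ⟪f' W, u⟫ := by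
      have hv1 : v - X1 = u - (1 / L) • f' W := by rw [hvdef, hudef]; abel
      have hx1z : X1 - z = (W - z) - u := by rw [hudef]; abel
      rw [hv1, hx1z]
      simp only [inner_sub_left, inner_sub_right, real_inner_smul_left]
      rw [real_inner_self_eq_norm_sq]
      field_simp
      ring
    have e4 : ⟪f' W, z - W⟫ = -⟪f' W, W - z⟫ := by
      rw [← inner_neg_right]; congr 1; abel
    have e5 : ⟪u, z - W⟫ = -⟪u, W - z⟫ := by
      rw [← inner_neg_right]; congr 1; abel
    have e2' : L / 2 * ‖X1 - W‖ ^ 2 = L / 2 * ‖u‖ ^ 2 := by rw [e2]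
    have e5' : L * ⟪u, z - W⟫ = -(L * ⟪u, W - z⟫) := by rw [e5]; ring
    linarith [hps, hsm, hsc, e1, e2', e3, e4, e5']
  -- y in terms of w
  have hy_w : ∀ k, y k - x k = (s + 1) • (w k - x k) := by
    intro k; cases k with
    | zero => rw [hy0, hw0]; simp
    | succ m =>
      rw [hyk m, hwk m, add_sub_cancel_left, add_sub_cancel_left, smul_smul]
      congr 1
      rw [hθ]
      field_simp
  -- one-step potential inequality
  have hstep : ∀ k,
      ‖y (k+1) - xstar‖ ^ 2 + 2 / α * ((f (x (k+1)) + ψ (x (k+1))) - (f xstar + ψ xstar))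
        ≤ (1 - 1 / s) * (‖y k - xstar‖ ^ 2
            + 2 / α * ((f (x k) + ψ (x k)) - (f xstar + ψ xstar)))
          - (s - 1 / s) * ‖w k - x k‖ ^ 2 := by
    intro k
    set a := w k - xstar with hadef
    set b := x k - xstar with hbdef
    set u := w k - x (k+1) with hudef
    have h1' := hdescent k (x k) (hxtop k)
    have h2' := hdescent k xstar hstartop
    rw [← hudef] at h1' h2'
    have q1 : ‖u‖ ^ 2 = ⟪u,u⟫ := (real_inner_self_eq_norm_sq u).symm
    have q2 : ⟪u, x k - w k⟫ = ⟪b,u⟫ - ⟪a,u⟫ := by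
      have : x k - w k = b - a := by rw [hadef, hbdef]; abel
      rw [this, inner_sub_right, real_inner_comm u b, real_inner_comm u a]
    have q3 : ‖x k - w k‖ ^ 2 = ⟪b,b⟫ - 2*⟪a,b⟫ + ⟪a,a⟫ := by
      have : x k - w k = b - a := by rw [hadef, hbdef]; abel
      rw [this, norm_sub_sq_real, ← real_inner_self_eq_norm_sq,
        ← real_inner_self_eq_norm_sq, real_inner_comm b a]
    have q4 : ⟪u, xstar - w k⟫ = -⟪a,u⟫ := by
      have : xstar - w k = -a := by rw [hadef]; abel
      rw [this, inner_neg_right, real_inner_comm u a]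
    have q5 : ‖xstar - w k‖ ^ 2 = ⟪a,a⟫ := by
      have : xstar - w k = -a := by rw [hadef]; abel
      rw [this, norm_neg, ← real_inner_self_eq_norm_sq]
    rw [hLs, q1, q2, q3] at h1'
    rw [hLs, q1, q4, q5] at h2'
    have h1 : f (x (k+1)) + ψ (x (k+1)) ≤ (f (x k) + ψ (x k))
        - s^2*α/2*⟪u,u⟫ - s^2*α*(⟪b,u⟫ - ⟪a,u⟫) - α/2*(⟪b,b⟫ - 2*⟪a,b⟫ + ⟪a,a⟫) := by
      linarith [h1']
    have h2 : f (x (k+1)) + ψ (x (k+1)) ≤ (f xstar + ψ xstar)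
        - s^2*α/2*⟪u,u⟫ - s^2*α*(-⟪a,u⟫) - α/2*⟪a,a⟫ := by
      linarith [h2']
    have key := agpb_scalar s α ⟪a,a⟫ ⟪b,b⟫ ⟪u,u⟫ ⟪a,b⟫ ⟪a,u⟫ ⟪b,u⟫
      (f (x (k+1)) + ψ (x (k+1))) (f (x k) + ψ (x k)) (f xstar + ψ xstar) hs1 hα h1 h2
    have g1 : ‖y (k+1) - xstar‖ ^ 2
        = s^2*⟪a,a⟫ + (1-s)^2*⟪b,b⟫ + s^2*⟪u,u⟫ + 2*s*(1-s)*⟪a,b⟫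
          + (-(2*s^2))*⟪a,u⟫ + (-(2*s*(1-s)))*⟪b,u⟫ := by
      have hyv : y (k+1) - xstar = s • a + (1-s) • b + (-s) • u := by
        rw [hyk k, hadef, hbdef, hudef]; module
      rw [hyv, agpb_norm_expand]; ring
    have g2 : ‖y k - xstar‖ ^ 2
        = (1+s)^2*⟪a,a⟫ + s^2*⟪b,b⟫ + (0:ℝ)^2*⟪u,u⟫ + (-(2*(1+s)*s))*⟪a,b⟫
          + 2*(1+s)*0*⟪a,u⟫ + 2*(-s)*0*⟪b,u⟫ := by
      have hyx : y k = (s + 1) • (w k - x k) + x k := sub_eq_iff_eq_add.mp (hy_w k)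
      have hyv : y k - xstar = (1+s) • a + (-s) • b + (0:ℝ) • u := by
        rw [hyx, hadef, hbdef, hudef]; module
      rw [hyv, agpb_norm_expand]; ring
    have g3 : ‖w k - x k‖ ^ 2 = ⟪a,a⟫ - 2*⟪a,b⟫ + ⟪b,b⟫ := by
      have : w k - x k = a - b := by rw [hadef, hbdef]; abel
      rw [this, norm_sub_sq_real, ← real_inner_self_eq_norm_sq,
        ← real_inner_self_eq_norm_sq]
    rw [g1, g2, g3]
    have g2' : (1+s)^2*⟪a,a⟫ + s^2*⟪b,b⟫ + (0:ℝ)^2*⟪u,u⟫ + (-(2*(1+s)*s))*⟪a,b⟫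
          + 2*(1+s)*0*⟪a,u⟫ + 2*(-s)*0*⟪b,u⟫
        = (1+s)^2*⟪a,a⟫ + s^2*⟪b,b⟫ + (-(2*(1+s)*s))*⟪a,b⟫ := by ring
    rw [g2']
    linarith [key]
  -- real/EReal bookkeeping and induction
  have hσ0R : σ 0 = ‖y 0 - xstar‖ ^ 2
      + 2 / α * ((f (x 0) + ψ (x 0)) - (f xstar + ψ xstar)) := by
    rw [hFeq (x 0) hx0top, hFeq xstar hstartop] at hσ0
    exact_mod_cast hσ0
  have main : ∀ k, ‖y k - xstar‖ ^ 2
      + 2 / α * ((f (x k) + ψ (x k)) - (f xstar + ψ xstar)) ≤ σ k := by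
    intro k
    induction k with
    | zero => rw [hσ0R]
    | succ m ih =>
      have h := hstep m
      have h2 : (1 - 1/s) * (‖y m - xstar‖ ^ 2
            + 2 / α * ((f (x m) + ψ (x m)) - (f xstar + ψ xstar)))
          ≤ (1 - 1/s) * σ m := by
        apply mul_le_mul_of_nonneg_left ih
        have : 1/s < 1 := by rw [div_lt_one hs0]; exact hs1
        linarith
      rw [hσk m]
      have hinv : s⁻¹ = 1/s := (one_div s).symm
      rw [hinv]
      linarith [h, h2]
  intro k
  rw [hFeq (x k) (hxtop k), hFeq xstar hstartop]
  exact_mod_cast main k
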